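/- arXiv:1112.4587 — 4 statements merged into one kernel-verified Lean document; each statement's English description precedes it below -/
import Mathlib

section
/- Let M be a 3×3 complex matrix satisfying M* J M = J, where J is the 3×3 matrix with entries J₁₃ = J₃₁ = i, J₂₂ = −i, and all other entries 0 (and M* denotes the conjugate transpose of M). Then det M has absolute value 1, and if det M = 1 then the characteristic polynomial of M satisfies det(M − τI) = −τ³ + τ²·tr(M) − τ·conj(tr(M)) + 1 for all τ ∈ ℂ. -/
open Complex Matrix

private lemma cp3 (M : Matrix (Fin 3) (Fin 3) ℂ) (τ : ℂ) :
    (M - τ • (1 : Matrix (Fin 3) (Fin 3) ℂ)).det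
      = -τ ^ 3 + τ ^ 2 * M.trace - τ * M.adjugate.trace + M.det := by
  simp [Matrix.det_fin_three, Matrix.trace_fin_three, Matrix.adjugate_fin_three,
    Matrix.sub_apply, Matrix.smul_apply, Matrix.one_apply]
  ring

theorem stmt_0 (M : Matrix (Fin 3) (Fin 3) ℂ)
    (J : Matrix (Fin 3) (Fin 3) ℂ)
    (hJ : J = !![0, 0, I; 0, -I, 0; I, 0, 0])
    (hM : Mᴴ * J * M = J) :
    ‖M.det‖ = 1 ∧
      (M.det = 1 → ∀ τ : ℂ,
        (M - τ • (1 : Matrix (Fin 3) (Fin 3) ℂ)).det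
          = -τ ^ 3 + τ ^ 2 * M.trace - τ * (starRingEnd ℂ) M.trace + 1) := by
  have hdetJ : J.det = -I := by
    subst hJ
    simp [Matrix.det_fin_three]
  have hdet := congrArg Matrix.det hM
  rw [Matrix.det_mul, Matrix.det_mul, Matrix.det_conjTranspose, hdetJ] at hdet
  have hconj : (starRingEnd ℂ) M.det * M.det = 1 := by
    have hI : (-I : ℂ) ≠ 0 := by simpa using Complex.I_ne_zero
    apply mul_right_cancel₀ hI
    rw [one_mul]
    calc (starRingEnd ℂ) M.det * M.det * -I = star M.det * -I * M.det := by simp only [starRingEnd_apply]; ring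
    _ = -I := hdet
  have habs : ‖M.det‖ = 1 := by
    have h2 : Complex.normSq M.det = 1 := by
      have := hconj
      rw [mul_comm, Complex.mul_conj] at this
      exact_mod_cast this
    have h3 : ‖M.det‖ ^ 2 = 1 := by rw [Complex.sq_norm, h2]
    nlinarith [norm_nonneg M.det]
  refine ⟨habs, ?_⟩
  intro hd τ
  have hJJ : J * J = -1 := by
    subst hJ
    ext i j
    fin_cases i <;> fin_cases j <;>
      simp [Matrix.mul_apply, Fin.sum_univ_three, Matrix.one_apply, Matrix.neg_apply,
        Matrix.vecHead, Matrix.vecTail]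
  set L : Matrix (Fin 3) (Fin 3) ℂ := -(J * (Mᴴ * J)) with hL
  have hLM : L * M = 1 := by
    have : J * (Mᴴ * J * M) = J * J := congrArg (J * ·) hM
    calc L * M = -(J * (Mᴴ * J * M)) := by noncomm_ring [hL]
    _ = -(J * J) := by rw [this]
    _ = 1 := by rw [hJJ]; simp
  have hMadj : M * M.adjugate = 1 := by
    rw [Matrix.mul_adjugate, hd, one_smul]
  have hadj : M.adjugate = L := by
    calc M.adjugate = (L * M) * M.adjugate := by rw [hLM, one_mul]
    _ = L * (M * M.adjugate) := by rw [Matrix.mul_assoc]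
    _ = L := by rw [hMadj, mul_one]
  have htr : M.adjugate.trace = (starRingEnd ℂ) M.trace := by
    rw [hadj, hL, Matrix.trace_neg, Matrix.trace_mul_comm, Matrix.mul_assoc, hJJ]
    simp [Matrix.trace_conjTranspose]
  rw [cp3, htr, hd]
end

section
/- Let τ₁, τ₂, τ₃ ∈ ℂ with τ₁τ₂τ₃ = 1 and with the set {τ₁, τ₂, τ₃} invariant under τ ↦ 1/conj(τ). If exactly one multiplier, say τ₁, lies on the unit circle, then there exists k ∈ ℂ with Im k ≠ 0 such that, after reordering, the multipliers are e^{ik}, e^{i·conj(k)}, and e^{−2i·Re(k)}. -/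
open Complex

theorem stmt_3 (τ₁ τ₂ τ₃ : ℂ) (hprod : τ₁ * τ₂ * τ₃ = 1)
    (hinv : ∀ τ ∈ ({τ₁, τ₂, τ₃} : Set ℂ), 1 / (starRingEnd ℂ) τ ∈ ({τ₁, τ₂, τ₃} : Set ℂ))
    (h1 : ‖τ₁‖ = 1) (h2 : ‖τ₂‖ ≠ 1) (h3 : ‖τ₃‖ ≠ 1) :
    ∃ k : ℂ, k.im ≠ 0 ∧
      ({τ₁, τ₂, τ₃} : Set ℂ)
        = ({Complex.exp (I * k), Complex.exp (I * (starRingEnd ℂ) k),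
            Complex.exp (-2 * I * (k.re : ℂ))} : Set ℂ) := by
  have hτ₂ : τ₂ ≠ 0 := by
    rintro rfl; simp at hprod
  have habs2 : ‖τ₂‖ ≠ 0 := by simpa using hτ₂
  -- identify τ₃ = 1 / conj τ₂
  have hmem : 1 / (starRingEnd ℂ) τ₂ ∈ ({τ₁, τ₂, τ₃} : Set ℂ) := hinv τ₂ (by simp)
  have habs_inv : ‖1 / (starRingEnd ℂ) τ₂‖ = 1 / ‖τ₂‖ := by
    simp [map_div₀]
  have hτ₃ : τ₃ = 1 / (starRingEnd ℂ) τ₂ := by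
    rcases hmem with h | h | h
    · exfalso
      rw [h, h1] at habs_inv
      apply h2
      field_simp at habs_inv
      exact habs_inv
    · exfalso
      have := congrArg (‖·‖) h
      rw [habs_inv] at this
      apply h2
      have h2pos : 0 < ‖τ₂‖ := by positivity
      have hsq : ‖τ₂‖ * ‖τ₂‖ = 1 := by
        field_simp at this; linarith
      rcases mul_self_eq_one_iff.mp hsq with h' | h'
      · exact h'
      · linarith
    · exact h.symm
  set k : ℂ := (-I) * Complex.log τ₂ with hk
  have hIk : I * k = Complex.log τ₂ := by
    rw [hk]; linear_combination (-(Complex.log τ₂)) * Complex.I_sq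
  have hA : Complex.exp (I * k) = τ₂ := by
    rw [hIk, Complex.exp_log hτ₂]
  have hB : Complex.exp (I * (starRingEnd ℂ) k) = τ₃ := by
    have : I * (starRingEnd ℂ) k = -((starRingEnd ℂ) (Complex.log τ₂)) := by
      rw [hk, map_mul]
      simp only [map_neg, Complex.conj_I]
      linear_combination ((starRingEnd ℂ) (Complex.log τ₂)) * Complex.I_sq
    rw [this, Complex.exp_neg, Complex.exp_conj, Complex.exp_log hτ₂, hτ₃]
    simp
  have hsum : I * k + I * (starRingEnd ℂ) k + (-2 * I * (k.re : ℂ)) = 0 := by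
    have := Complex.add_conj k
    rw [← mul_add, this]
    push_cast
    ring
  have hC : Complex.exp (-2 * I * (k.re : ℂ)) = τ₁ := by
    have hmul : Complex.exp (I * k) * Complex.exp (I * (starRingEnd ℂ) k) *
        Complex.exp (-2 * I * (k.re : ℂ)) = 1 := by
      rw [← Complex.exp_add, ← Complex.exp_add, hsum, Complex.exp_zero]
    rw [hA, hB] at hmul
    have hτ₃0 : τ₃ ≠ 0 := by
      intro h; rw [h] at hprod; simp at hprod
    have h23 : τ₂ * τ₃ ≠ 0 := mul_ne_zero hτ₂ hτ₃0
    have key : Complex.exp (-2 * I * (k.re : ℂ)) * (τ₂ * τ₃) = τ₁ * (τ₂ * τ₃) := by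
      linear_combination hmul - hprod
    exact mul_right_cancel₀ h23 key
  have him : k.im ≠ 0 := by
    have : k.im = -(Complex.log τ₂).re := by
      rw [hk]; simp [Complex.mul_im]
    rw [this, Complex.log_re]
    intro h
    have h0 : Real.log ‖τ₂‖ = 0 := by linarith [neg_eq_zero.mp h]
    rcases Real.log_eq_zero.mp h0 with h' | h' | h'
    · exact habs2 h'
    · exact h2 h'
    · have := norm_nonneg τ₂; linarith
  refine ⟨k, him, ?_⟩
  rw [hA, hB, hC]
  ext x
  simp only [Set.mem_insert_iff, Set.mem_singleton_iff]
  tauto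
end

section
/- Let k₁ ∈ ℝ and k₂, k₃ ∈ ℂ with k₃ = conj(k₂) and Im k₂ ≠ 0, and suppose e^{i(k₁+k₂+k₃)} = 1. Then the quantity ρ = −64·sin²((k₁−k₂)/2)·sin²((k₁−k₃)/2)·sin²((k₂−k₃)/2) is real and strictly positive. -/
open Complex

theorem stmt_7 (k₁ : ℝ) (k₂ k₃ : ℂ) (hk₃ : k₃ = (starRingEnd ℂ) k₂) (him : k₂.im ≠ 0)
    (h : Complex.exp (I * ((k₁ : ℂ) + k₂ + k₃)) = 1) :
    (( -64 * Complex.sin (((k₁ : ℂ) - k₂) / 2) ^ 2 * Complex.sin (((k₁ : ℂ) - k₃) / 2) ^ 2 *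
        Complex.sin ((k₂ - k₃) / 2) ^ 2).im = 0) ∧
    0 < ( -64 * Complex.sin (((k₁ : ℂ) - k₂) / 2) ^ 2 * Complex.sin (((k₁ : ℂ) - k₃) / 2) ^ 2 *
        Complex.sin ((k₂ - k₃) / 2) ^ 2).re := by
  set s := Complex.sin (((k₁ : ℂ) - k₂) / 2) with hs
  have h1 : ((k₁ : ℂ) - k₃) / 2 = (starRingEnd ℂ) (((k₁ : ℂ) - k₂) / 2) := by
    rw [hk₃, map_div₀, map_sub, Complex.conj_ofReal, map_ofNat]
  have h2 : Complex.sin (((k₁ : ℂ) - k₃) / 2) = (starRingEnd ℂ) s := by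
    rw [h1, hs, ← Complex.sin_conj]
  have h3 : (k₂ - k₃) / 2 = (k₂.im : ℂ) * I := by
    rw [hk₃, Complex.sub_conj]
    push_cast
    ring
  have h4 : Complex.sin ((k₂ - k₃) / 2) = (Real.sinh k₂.im : ℂ) * I := by
    rw [h3, Complex.sin_mul_I, Complex.ofReal_sinh]
  have hkey : -64 * s ^ 2 * ((starRingEnd ℂ) s) ^ 2 * ((Real.sinh k₂.im : ℂ) * I) ^ 2
      = ((64 * (Complex.normSq s) ^ 2 * (Real.sinh k₂.im) ^ 2 : ℝ) : ℂ) := by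
    have hms : s * (starRingEnd ℂ) s = (Complex.normSq s : ℂ) := Complex.mul_conj s
    have : -64 * s ^ 2 * ((starRingEnd ℂ) s) ^ 2 * ((Real.sinh k₂.im : ℂ) * I) ^ 2
        = 64 * (s * (starRingEnd ℂ) s) ^ 2 * (Real.sinh k₂.im : ℂ) ^ 2 := by
      have : I ^ 2 = -1 := Complex.I_sq
      rw [mul_pow, this]; ring
    rw [this, hms]
    push_cast
    ring
  have hs0 : s ≠ 0 := by
    intro h0
    rw [hs, Complex.sin_eq_zero_iff] at h0
    obtain ⟨n, hn⟩ := h0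
    have := congrArg Complex.im hn
    simp [Complex.div_im] at this
    exact him (by linarith)
  have hsinh : Real.sinh k₂.im ≠ 0 := fun h0 => him (by
    have := Real.sinh_eq_zero.mp h0; exact this)
  have hpos : 0 < 64 * (Complex.normSq s) ^ 2 * (Real.sinh k₂.im) ^ 2 := by
    have h1 : 0 < Complex.normSq s := Complex.normSq_pos.mpr hs0
    positivity
  rw [h2, h4, hkey]
  exact ⟨Complex.ofReal_im _, by rw [Complex.ofReal_re]; exact hpos⟩
end

section
/- Let M(t) be a differentiable 3×3 complex matrix-valued function on ℝ satisfying M'(t) = (P + Q(t))·M(t) with M(0) = I, where P = [[0,1,0],[0,0,1],[−iλ,0,0]] with λ ∈ ℝ, and Q(t) = [[0,0,0],[−p(t),0,0],[i·q(t),−p(t),0]] with p, q real-valued. Let J = [[0,0,i],[0,−i,0],[i,0,0]]. Then M(t)* J M(t) = J for all t ∈ ℝ. -/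
open Complex Matrix

theorem stmt_14 (lam : ℝ) (p q : ℝ → ℝ)
    (P : Matrix (Fin 3) (Fin 3) ℂ)
    (hP : P = !![0, 1, 0; 0, 0, 1; -I * (lam : ℂ), 0, 0])
    (Q : ℝ → Matrix (Fin 3) (Fin 3) ℂ)
    (hQ : ∀ t : ℝ, Q t = !![0, 0, 0; -(p t : ℂ), 0, 0; I * (q t : ℂ), -(p t : ℂ), 0])
    (J : Matrix (Fin 3) (Fin 3) ℂ)
    (hJ : J = !![0, 0, I; 0, -I, 0; I, 0, 0])
    (M : ℝ → Matrix (Fin 3) (Fin 3) ℂ)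
    (hM : ∀ t : ℝ, ∀ i j : Fin 3,
      HasDerivAt (fun s => M s i j) (((P + Q t) * M t) i j) t)
    (hM0 : M 0 = 1) :
    ∀ t : ℝ, (M t)ᴴ * J * M t = J := by
  have hkey : ∀ t, (P + Q t)ᴴ * J + J * (P + Q t) = 0 := by
    intro t
    subst hP hJ
    rw [hQ t]
    ext i j
    fin_cases i <;> fin_cases j <;>
      simp [Matrix.mul_apply, Fin.sum_univ_three, Matrix.conjTranspose_apply,
        Matrix.add_apply, Matrix.vecHead, Matrix.vecTail] <;> ring_nf
  have hD : ∀ t (i j : Fin 3),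
      HasDerivAt (fun s => ((M s)ᴴ * J * M s) i j) 0 t := by
    intro t i j
    have key : (((P + Q t) * M t)ᴴ * J * M t + (M t)ᴴ * J * ((P + Q t) * M t)) i j = 0 := by
      have h : ((P + Q t) * M t)ᴴ * J * M t + (M t)ᴴ * J * ((P + Q t) * M t)
          = (M t)ᴴ * ((P + Q t)ᴴ * J + J * (P + Q t)) * M t := by
        simp [Matrix.conjTranspose_mul, Matrix.mul_add, Matrix.add_mul, Matrix.mul_assoc]
      rw [h, hkey t]
      simp
    have hM' : ∀ k l, HasDerivAt (fun s => M s k l) (((P + Q t) * M t) k l) t :=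
      fun k l => hM t k l
    have h1 : HasDerivAt
        (fun s => ∑ l, (∑ k, star (M s k i) * J k l) * M s l j)
        (∑ l, ((∑ k, star (((P + Q t) * M t) k i) * J k l) * M t l j
          + (∑ k, star (M t k i) * J k l) * (((P + Q t) * M t) l j))) t := by
      apply HasDerivAt.fun_sum
      intro l _
      exact (HasDerivAt.fun_sum (fun k _ => ((hM' k i).star.mul_const (J k l)))).mul (hM' l j)
    have hfun : (fun s => ((M s)ᴴ * J * M s) i j)
        = fun s => ∑ l, (∑ k, star (M s k i) * J k l) * M s l j := by
      funext s
      simp [Matrix.mul_apply, Matrix.conjTranspose_apply]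
    have hval : (∑ l, ((∑ k, star (((P + Q t) * M t) k i) * J k l) * M t l j
          + (∑ k, star (M t k i) * J k l) * (((P + Q t) * M t) l j))) = 0 := by
      rw [Finset.sum_add_distrib]
      simpa [Matrix.mul_apply, Matrix.conjTranspose_apply, Matrix.add_apply, mul_comm] using key
    rw [hfun]
    rw [← hval] at *
    exact h1
  intro t
  have hconst : ∀ i j : Fin 3, ((M t)ᴴ * J * M t) i j = ((M 0)ᴴ * J * M 0) i j := by
    intro i j
    exact is_const_of_deriv_eq_zero
      (fun s => (hD s i j).differentiableAt)
      (fun s => (hD s i j).deriv) t 0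
  have : (M t)ᴴ * J * M t = (M 0)ᴴ * J * M 0 := by
    ext i j; exact hconst i j
  rw [this, hM0]
  simp
end
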